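/- The map V_max : ∂M → M̄, which cuts an infinite heap at its first maximal clique, is an asynchronous stopping time. -/

import Mathlib

open MeasureTheory Filter
open scoped ENNReal NNReal

namespace HeapPaper

variable {S : Type}

/-- Commutation pairs of words, generating the trace congruence. -/
def CommRel (I : S → S → Prop) (w₁ w₂ : FreeMonoid S) : Prop :=
  ∃ a b : S, I a b ∧ w₁ = FreeMonoid.of a * FreeMonoid.of b ∧
    w₂ = FreeMonoid.of b * FreeMonoid.of a

/-- The congruence on the free monoid generated by the commutation of independent pieces. -/
def HeapCon (I : S → S → Prop) : Con (FreeMonoid S) := conGen (CommRel I)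

/-- The heap monoid `M(Σ, I)`:  the presented monoid `⟨Σ | ab = ba, (a,b) ∈ I⟩`. -/
def Heap (I : S → S → Prop) := (HeapCon I).Quotient

instance (I : S → S → Prop) : Monoid (Heap I) :=
  inferInstanceAs (Monoid (HeapCon I).Quotient)

/-- The unique additive extension to heaps of a function `φ` defined on pieces. -/
def addExt {A : Type} [AddCommMonoid A] {I : S → S → Prop} (φ : S → A) : Heap I → A :=
  fun x => Multiplicative.toAdd <|
    (Con.lift (HeapCon I) (FreeMonoid.lift fun a => Multiplicative.ofAdd (φ a))
      (Con.conGen_le.mpr (by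
        rintro w₁ w₂ ⟨a, b, hab, rfl, rfl⟩
        exact (Con.ker_rel _).mpr (by simp [map_mul, mul_comm])))) x

/-- The length `|x|` of a heap: the common length of its representative words. -/
def len {I : S → S → Prop} (x : Heap I) : ℕ := addExt (fun _ => 1) x

/-- The number `|x|ₐ` of occurrences of the piece `a` in the heap `x`. -/
def occ {I : S → S → Prop} [DecidableEq S] (a : S) (x : Heap I) : ℕ :=
  addExt (fun b => if b = a then 1 else 0) x

/-- The additive extension `⟨φ, x⟩` of a real-valued cost function. -/
def pairing {I : S → S → Prop} (φ : S → ℝ) (x : Heap I) : ℝ := addExt φ x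

/-- The left-divisibility order on the heap monoid. -/
def hLe {I : S → S → Prop} (x y : Heap I) : Prop := ∃ z : Heap I, y = x * z

/-- Cliques: finite sets of pairwise independent pieces. -/
def Cl (I : S → S → Prop) := {s : Finset S // ∀ a ∈ s, ∀ b ∈ s, a ≠ b → I a b}

/-- The empty clique. -/
def emptyCl (I : S → S → Prop) : Cl I := ⟨∅, by simp⟩

/-- The heap associated with a clique (product of its pieces, in any order). -/
def Cl.heap {I : S → S → Prop} (γ : Cl I) : Heap I :=
  γ.1.noncommProd (fun a => (HeapCon I).mk' (FreeMonoid.of a)) (by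
    intro a ha b hb hab
    have hI : I a b := γ.2 a ha b hb hab
    show (HeapCon I).mk' (FreeMonoid.of a) * (HeapCon I).mk' (FreeMonoid.of b)
        = (HeapCon I).mk' (FreeMonoid.of b) * (HeapCon I).mk' (FreeMonoid.of a)
    rw [← map_mul, ← map_mul]
    exact (Con.eq _).mpr (ConGen.Rel.of _ _ ⟨a, b, hI, rfl, rfl⟩))

/-- The Cartier–Foata move relation `γ → γ'` between cliques. -/
def Move {I : S → S → Prop} (γ γ' : Cl I) : Prop :=
  ∀ b ∈ γ'.1, ∃ a ∈ γ.1, ¬ I a b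

/-- The boundary `∂M`: infinite admissible sequences of nonempty cliques. -/
def Bnd (I : S → S → Prop) :=
  {ξ : ℕ → Cl I // (∀ n, (ξ n).1.Nonempty) ∧ ∀ n, Move (ξ n) (ξ (n + 1))}

/-- `M̄ = M ∪ ∂M`. -/
def MB (I : S → S → Prop) := Heap I ⊕ Bnd I

/-- Partial products of a sequence of cliques. -/
def ppSeq {I : S → S → Prop} (c : ℕ → Cl I) (n : ℕ) : Heap I :=
  ((List.range n).map fun i => (c i).heap).prod

/-- `c` is the Cartier–Foata decomposition of the heap `x`, padded with empty cliques:
`c` is admissible, eventually empty, with partial products eventually equal to `x`. -/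
def CFprop (I : S → S → Prop) (c : ℕ → Cl I) (x : Heap I) : Prop :=
  (∀ n, Move (c n) (c (n + 1))) ∧
    ∃ N, ∀ n, N ≤ n → ppSeq c n = x ∧ c n = emptyCl I

/-- The (padded) Cartier–Foata decomposition of a heap. -/
noncomputable def cf (I : S → S → Prop) (x : Heap I) : ℕ → Cl I :=
  letI := Classical.propDecidable (∃ c, CFprop I c x)
  if h : ∃ c, CFprop I c x then h.choose else fun _ => emptyCl I

/-- The Cartier–Foata sequence of an element of `M̄`. -/
noncomputable def seqOf {I : S → S → Prop} : MB I → ℕ → Cl I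
  | .inl x => cf I x
  | .inr ξ => ξ.1

/-- Partial products of the Cartier–Foata sequence of an element of `M̄`. -/
noncomputable def pp {I : S → S → Prop} (ζ : MB I) (n : ℕ) : Heap I :=
  ppSeq (seqOf ζ) n

/-- The order on `M̄`: `ξ ≤ ξ'` iff `γ₁⋯γₙ ≤ γ'₁⋯γ'ₙ` in `M` for all `n`. -/
noncomputable def mLe {I : S → S → Prop} (ζ ζ' : MB I) : Prop :=
  ∀ n : ℕ, hLe (pp ζ n) (pp ζ' n)

/-- The elementary cylinder `↑x ⊆ ∂M` of base `x ∈ M`. -/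
noncomputable def cyl {I : S → S → Prop} (x : Heap I) : Set (Bnd I) :=
  {ξ : Bnd I | mLe (.inl x) (.inr ξ)}

/-- The σ-algebra `𝔉` on `∂M` generated by the elementary cylinders. -/
noncomputable def Fsa (I : S → S → Prop) : MeasurableSpace (Bnd I) :=
  MeasurableSpace.generateFrom {A : Set (Bnd I) | ∃ x : Heap I, A = cyl x}

noncomputable instance (I : S → S → Prop) : MeasurableSpace (Bnd I) := Fsa I

/-- `ζ` is the least upper bound in `M̄` of the nondecreasing sequence `(x·γ₁⋯γₙ)ₙ`,
where `(γₙ)` is the Cartier–Foata sequence of `ξ`; this characterizes `x·ξ`. -/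
noncomputable def IsConc {I : S → S → Prop} (x : Heap I) (ξ : Bnd I) (ζ : MB I) : Prop :=
  (∀ n : ℕ, mLe (.inl (x * pp (.inr ξ) n)) ζ) ∧
    ∀ η : MB I, (∀ n : ℕ, mLe (.inl (x * pp (.inr ξ) n)) η) → mLe ζ η

/-- The concatenation `x·ξ ∈ ∂M` of a heap `x` and an infinite heap `ξ`. -/
noncomputable def concB {I : S → S → Prop} (x : Heap I) (ξ : Bnd I) : Bnd I :=
  letI := Classical.propDecidable (∃ ζ : Bnd I, IsConc x ξ (.inr ζ))
  if h : ∃ ζ : Bnd I, IsConc x ξ (.inr ζ) then h.choose else ξ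

/-- The difference `ξ − x`: the unique `ζ ∈ ∂M` with `x·ζ = ξ` (junk value if none exists). -/
noncomputable def subB {I : S → S → Prop} (ξ : Bnd I) (x : Heap I) : Bnd I :=
  letI := Classical.propDecidable (∃ ζ : Bnd I, concB x ζ = ξ)
  if h : ∃ ζ : Bnd I, concB x ζ = ξ then h.choose else ξ

/-- Asynchronous stopping time. -/
noncomputable def IsAST {I : S → S → Prop} (V : Bnd I → MB I) : Prop :=
  (∀ ξ : Bnd I, mLe (V ξ) (.inr ξ)) ∧
    ∀ (ξ ξ' : Bnd I) (x : Heap I), V ξ = .inl x → mLe (.inl x) (.inr ξ') → V ξ' = V ξ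

/-- The shift operator `θ_V` associated with an AST `V` (junk: identity outside its domain). -/
noncomputable def shiftV {I : S → S → Prop} (V : Bnd I → MB I) (ξ : Bnd I) : Bnd I :=
  match V ξ with
  | .inl x => subB ξ x
  | .inr _ => ξ

/-- The σ-algebra `𝔉_V` generated by the cylinders of the finite values of `V`. -/
noncomputable def astSA {I : S → S → Prop} (V : Bnd I → MB I) : MeasurableSpace (Bnd I) :=
  MeasurableSpace.generateFrom
    {A : Set (Bnd I) | ∃ x : Heap I, (∃ ξ : Bnd I, V ξ = .inl x) ∧ A = cyl x}

/-- The iterated sequence `(Vₙ)ₙ` of an AST `V`:  `V₀ = 0` and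
`V_{n+1}(ξ) = Vₙ(ξ)·V(ξ − Vₙ(ξ))` if `Vₙ(ξ) ∈ M`, `V_{n+1}(ξ) = ξ` otherwise. -/
noncomputable def iter {I : S → S → Prop} (V : Bnd I → MB I) : ℕ → Bnd I → MB I
  | 0, _ => .inl 1
  | n + 1, ξ =>
    match iter V n ξ with
    | .inl x =>
      match V (subB ξ x) with
      | .inl y => .inl (x * y)
      | .inr ζ => .inr (concB x ζ)
    | .inr _ => .inr ξ

/-- The increment `Δ_{n+1} = V ∘ θ_{Vₙ}` (junk value outside the domain of `θ_{Vₙ}`). -/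
noncomputable def Delta {I : S → S → Prop} (V : Bnd I → MB I) (n : ℕ) (ξ : Bnd I) : MB I :=
  match iter V n ξ with
  | .inl x => V (subB ξ x)
  | .inr _ => .inr ξ

/-- The length of an element of `M̄`, with `|ξ| = ∞` for `ξ ∈ ∂M`. -/
noncomputable def lenE {I : S → S → Prop} : MB I → ℝ≥0∞
  | .inl x => (len x : ℝ≥0∞)
  | .inr _ => ⊤

/-- `E|V| < ∞`. -/
noncomputable def EVfin {I : S → S → Prop} (P : Measure (Bnd I)) (V : Bnd I → MB I) : Prop :=
  ∫⁻ ξ, lenE (V ξ) ∂P < ⊤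

/-- The AST `V` is exhaustive: it is `ℙ`-a.s. finite and `ℙ`-a.s. `ξ = ⋁ₙ Vₙ(ξ)`
(`ξ` is the least upper bound of its iterates). -/
noncomputable def Exhaustive {I : S → S → Prop} (P : Measure (Bnd I)) (V : Bnd I → MB I) : Prop :=
  (∀ᵐ ξ ∂P, ∃ x : Heap I, V ξ = .inl x) ∧
    ∀ᵐ ξ ∂P, (∀ n : ℕ, mLe (iter V n ξ) (.inr ξ)) ∧
      ∀ ζ : MB I, (∀ n : ℕ, mLe (iter V n ξ) ζ) → mLe (.inr ξ) ζ

/-- `ℙ` is a Bernoulli measure: a probability measure on `(∂M, 𝔉)` that is multiplicative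
and positive on elementary cylinders. -/
noncomputable def IsBernoulli {I : S → S → Prop} (P : Measure (Bnd I)) : Prop :=
  IsProbabilityMeasure P ∧
    (∀ x y : Heap I, P (cyl (x * y)) = P (cyl x) * P (cyl y)) ∧
    ∀ x : Heap I, 0 < P (cyl x)

/-- `ζ` is the greatest lower bound, within the complete lattice `L(ξ)`, of the set
`Hₐ(ξ)` of finite subheaps of `ξ` containing an occurrence of `a`:  this characterizes
the first hitting time of `a`. -/
noncomputable def IsHit {I : S → S → Prop} [DecidableEq S] (a : S) (ξ : Bnd I) (ζ : MB I) :
    Prop :=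
  mLe ζ (.inr ξ) ∧
    (∀ x : Heap I, mLe (.inl x) (.inr ξ) → 0 < occ a x → mLe ζ (.inl x)) ∧
    ∀ η : MB I, mLe η (.inr ξ) →
      (∀ x : Heap I, mLe (.inl x) (.inr ξ) → 0 < occ a x → mLe η (.inl x)) → mLe η ζ

/-- The first hitting time of the piece `a`. -/
noncomputable def hit {I : S → S → Prop} [DecidableEq S] (a : S) (ξ : Bnd I) : MB I :=
  letI := Classical.propDecidable (∃ ζ : MB I, IsHit a ξ ζ)
  if h : ∃ ζ : MB I, IsHit a ξ ζ then h.choose else .inr ξ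

/-- A maximal clique: a maximal element of `(𝒞, ≤)`. -/
noncomputable def IsMaxCl {I : S → S → Prop} (γ : Cl I) : Prop :=
  ∀ δ : Cl I, hLe γ.heap δ.heap → δ.heap = γ.heap

/-- The AST cutting an infinite heap at the first occurrence of a maximal clique. -/
noncomputable def Vmax {I : S → S → Prop} (ξ : Bnd I) : MB I :=
  letI := Classical.propDecidable
  if h : ∃ k : ℕ, IsMaxCl (ξ.1 k) then .inl (ppSeq ξ.1 (Nat.find h + 1)) else .inr ξ

/-- The ergodic mean `⟨φ, x⟩ / |x|` (junk value `0` on infinite heaps). -/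
noncomputable def ratioC {I : S → S → Prop} (φ : S → ℝ) : MB I → ℝ
  | .inl x => pairing φ x / (len x : ℝ)
  | .inr _ => 0

/-- The ratio `φ(x)/|x|` for `φ` defined on heaps (junk value `0` on infinite heaps). -/
noncomputable def ratioH {I : S → S → Prop} (φ : Heap I → ℝ) : MB I → ℝ
  | .inl x => φ x / (len x : ℝ)
  | .inr _ => 0

/-- The set `ℭ` of nonempty cliques. -/
def NCl (I : S → S → Prop) := {γ : Cl I // γ.1.Nonempty}

instance [Fintype S] (I : S → S → Prop) : Finite (Cl I) :=
  inferInstanceAs (Finite {s : Finset S // ∀ a ∈ s, ∀ b ∈ s, a ≠ b → I a b})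

instance [Fintype S] (I : S → S → Prop) : Finite (NCl I) :=
  inferInstanceAs (Finite {γ : Cl I // γ.1.Nonempty})

/-- The valuation `f(x) = ℙ(↑x)` associated with `ℙ`. -/
noncomputable def fval {I : S → S → Prop} (P : Measure (Bnd I)) (x : Heap I) : ℝ :=
  (P (cyl x)).toReal

open Classical in
/-- The Möbius transform `h` of the valuation `f` associated with `ℙ`. -/
noncomputable def mobius {I : S → S → Prop} (P : Measure (Bnd I)) (γ : Cl I) : ℝ :=
  ∑ᶠ γ' : Cl I,
    if hLe γ.heap γ'.heap then (-1 : ℝ) ^ (γ'.1.card - γ.1.card) * fval P γ'.heap else 0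

open Classical in
/-- The normalization `g(γ) = Σ_{γ'∈ℭ, γ→γ'} h(γ')`. -/
noncomputable def gnorm {I : S → S → Prop} (P : Measure (Bnd I)) (γ : Cl I) : ℝ :=
  ∑ᶠ γ' : Cl I, if γ'.1.Nonempty ∧ Move γ γ' then mobius P γ' else 0

open Classical in
/-- The transition matrix of the Markov chain of cliques. -/
noncomputable def Pmat {I : S → S → Prop} (P : Measure (Bnd I)) (γ γ' : Cl I) : ℝ :=
  if Move γ γ' then mobius P γ' / gnorm P γ else 0

/-- `π` is a stationary probability distribution, carried by the nonempty cliques, of the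
Markov chain of cliques. -/
noncomputable def IsStationary {I : S → S → Prop} (P : Measure (Bnd I)) (π : Cl I → ℝ) :
    Prop :=
  (∀ γ : Cl I, 0 ≤ π γ) ∧ (π (emptyCl I) = 0) ∧ (∑ᶠ γ : Cl I, π γ = 1) ∧
    ∀ γ' : Cl I, π γ' = ∑ᶠ γ : Cl I, π γ * Pmat P γ γ'

open Classical in
/-- The nonnegative matrix `B` on `ℭ×ℭ`: `B_{γ,γ'} = f(γ')` if `γ → γ'`, else `0`. -/
noncomputable def Bmat {I : S → S → Prop} (P : Measure (Bnd I)) :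
    Matrix (NCl I) (NCl I) ℝ :=
  fun γ γ' => if Move γ.1 γ'.1 then fval P γ'.1.heap else 0

/-- The spectral radius of `B` (as a complex matrix). -/
noncomputable def specRadB [Fintype S] {I : S → S → Prop} (P : Measure (Bnd I)) : ℝ≥0∞ :=
  letI : Fintype (NCl I) := Fintype.ofFinite _
  letI : DecidableEq (NCl I) := Classical.decEq _
  spectralRadius ℂ ((Bmat P).map (algebraMap ℝ ℂ))

/-- The height `τ(x)` of a heap: the number of cliques in its Cartier–Foata decomposition. -/
noncomputable def height {I : S → S → Prop} (x : Heap I) : ℕ :=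
  sInf {N : ℕ | ∀ n, N ≤ n → cf I x n = emptyCl I}

/-- The ratio `|x|/τ(x)` (junk value `0` on infinite heaps). -/
noncomputable def speedRatio {I : S → S → Prop} : MB I → ℝ
  | .inl x => (len x : ℝ) / (height x : ℝ)
  | .inr _ => 0

/-- `ψ ∘ θ_V` extended by `0` outside the domain of `θ_V`. -/
noncomputable def extShift {I : S → S → Prop} (V : Bnd I → MB I) (ψ : Bnd I → ℝ)
    (η : Bnd I) : ℝ :=
  match V η with
  | .inl _ => ψ (shiftV V η)
  | .inr _ => 0


/-! ### Auxiliary infrastructure for `Vmax_isAST` -/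


section VmaxAST

variable {I : S → S → Prop}

/-- Canonical projection from words to heaps. -/
def mkh (I : S → S → Prop) (w : FreeMonoid S) : Heap I := (HeapCon I).mk' w

lemma mkh_mul (w u : FreeMonoid S) : mkh I (w * u) = mkh I w * mkh I u :=
  map_mul (HeapCon I).mk' w u

lemma mkh_one : mkh I 1 = 1 := map_one (HeapCon I).mk'

lemma mkh_surj (x : Heap I) : ∃ w, mkh I w = x := (HeapCon I).mk'_surjective x

lemma mkh_eq_iff {w u : FreeMonoid S} : mkh I w = mkh I u ↔ HeapCon I w u := Con.eq _

lemma mkh_swap {a b : S} (h : I a b) :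
    mkh I (.of a * .of b) = mkh I (.of b * .of a) :=
  mkh_eq_iff.mpr (ConGen.Rel.of _ _ ⟨a, b, h, rfl, rfl⟩)

lemma addExt_mul {A : Type} [AddCommMonoid A] (φ : S → A) (x y : Heap I) :
    addExt φ (x * y) = addExt φ x + addExt φ y := by
  unfold addExt
  exact congrArg Multiplicative.toAdd (map_mul _ x y)

lemma addExt_of {A : Type} [AddCommMonoid A] (φ : S → A) (a : S) :
    addExt φ (mkh I (.of a)) = φ a := by
  unfold addExt mkh
  exact congrArg Multiplicative.toAdd ((Con.lift_mk' _ _).trans (FreeMonoid.lift_eval_of _ _))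

lemma addExt_one {A : Type} [AddCommMonoid A] (φ : S → A) :
    addExt φ (1 : Heap I) = 0 := by
  unfold addExt
  exact congrArg Multiplicative.toAdd (map_one _)

section Occ

variable [DecidableEq S]

lemma occ_mul (a : S) (x y : Heap I) : occ a (x * y) = occ a x + occ a y :=
  addExt_mul _ x y

lemma occ_of (a c : S) : occ a (mkh I (.of c)) = if c = a then 1 else 0 :=
  addExt_of _ c

lemma occ_one (a : S) : occ a (1 : Heap I) = 0 := addExt_one _

lemma occ_mkh (a : S) (l : List S) :
    occ a (mkh I (.ofList l)) = l.count a := by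
  induction l with
  | nil =>
      rw [FreeMonoid.ofList_nil, mkh_one, occ_one, List.count_nil]
  | cons c t ih =>
      rw [FreeMonoid.ofList_cons, mkh_mul, occ_mul, occ_of, ih, List.count_cons]
      simp [add_comm]

lemma count_eq_of_mkh_eq {l l' : List S}
    (h : mkh I (.ofList l) = mkh I (.ofList l')) (a : S) : l.count a = l'.count a := by
  rw [← occ_mkh (I := I), ← occ_mkh (I := I), h]

lemma mem_iff_of_mkh_eq {l l' : List S}
    (h : mkh I (.ofList l) = mkh I (.ofList l')) (a : S) : a ∈ l ↔ a ∈ l' := by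
  rw [← List.count_pos_iff, ← List.count_pos_iff, count_eq_of_mkh_eq h]

end Occ

lemma hLe_refl (x : Heap I) : hLe x x := ⟨1, (mul_one x).symm⟩

/-! ### Cancellation -/

section Cancel

variable [DecidableEq S]

/-- Deleting the first occurrence of a letter, as a map to the heap monoid. -/
private def delA (I : S → S → Prop) [DecidableEq S] (a : S) (w : FreeMonoid S) : Heap I :=
  mkh I (.ofList ((FreeMonoid.toList w).erase a))

lemma delA_congr (hirr : ∀ a : S, ¬ I a a) {a : S} {w u : FreeMonoid S}
    (h : HeapCon I w u) : delA I a w = delA I a u := by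
  induction h with
  | of w u h =>
      obtain ⟨c, d, hcd, rfl, rfl⟩ := h
      have hcd' : c ≠ d := fun hh => hirr c (hh ▸ hcd)
      show mkh I (.ofList ([c, d].erase a)) = mkh I (.ofList ([d, c].erase a))
      by_cases hc : c = a
      · subst hc
        have hdc : d ≠ c := Ne.symm hcd'
        rw [List.erase_cons_head, List.erase_cons_tail (by simp [hdc]), List.erase_cons_head]
      · by_cases hd : d = a
        · subst hd
          have hcd2 : c ≠ d := hcd'
          rw [List.erase_cons_tail (by simp [hcd2]), List.erase_cons_head,
            List.erase_cons_head]
        · rw [List.erase_cons_tail (by simp [hc]), List.erase_cons_tail (by simp [hd]),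
            List.erase_cons_tail (by simp [hd]), List.erase_cons_tail (by simp [hc]),
            List.erase_nil]
          exact mkh_swap hcd
  | refl _ => rfl
  | symm _ ih => exact ih.symm
  | trans _ _ ih1 ih2 => exact ih1.trans ih2
  | mul h1 h2 ih1 ih2 =>
      rename_i p p' q q'
      have e1 : mkh I p = mkh I p' := mkh_eq_iff.mpr h1
      have e2 : mkh I q = mkh I q' := mkh_eq_iff.mpr h2
      have e1' : mkh I (.ofList p.toList) = mkh I (.ofList p'.toList) := by
        rw [FreeMonoid.ofList_toList, FreeMonoid.ofList_toList]; exact e1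
      have hmem := mem_iff_of_mkh_eq e1' a
      show mkh I (.ofList ((p.toList ++ q.toList).erase a))
        = mkh I (.ofList ((p'.toList ++ q'.toList).erase a))
      by_cases hp : a ∈ p.toList
      · have hp' : a ∈ p'.toList := hmem.mp hp
        rw [List.erase_append, if_pos hp, List.erase_append, if_pos hp',
          FreeMonoid.ofList_append, FreeMonoid.ofList_append, mkh_mul, mkh_mul]
        have : mkh I (.ofList q.toList) = mkh I (.ofList q'.toList) := by
          rw [FreeMonoid.ofList_toList, FreeMonoid.ofList_toList]; exact e2
        rw [this]
        exact congrArg (· * mkh I (.ofList q'.toList)) (ih1)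
      · have hp' : a ∉ p'.toList := fun hh => hp (hmem.mpr hh)
        rw [List.erase_append, if_neg hp, List.erase_append, if_neg hp',
          FreeMonoid.ofList_append, FreeMonoid.ofList_append, mkh_mul, mkh_mul, e1']
        exact congrArg (mkh I (.ofList p'.toList) * ·) (ih2)

lemma cancel_of (hirr : ∀ a : S, ¬ I a a) {a : S} {u v : Heap I}
    (h : mkh I (.of a) * u = mkh I (.of a) * v) : u = v := by
  obtain ⟨p, rfl⟩ := mkh_surj u
  obtain ⟨q, rfl⟩ := mkh_surj v
  rw [← mkh_mul, ← mkh_mul] at h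
  have hd := delA_congr (I := I) hirr (a := a) (mkh_eq_iff.mp h)
  have e1 : delA I a (.of a * p) = mkh I p := by
    unfold delA
    rw [FreeMonoid.toList_of_mul, List.erase_cons_head, FreeMonoid.ofList_toList]
  have e2 : delA I a (.of a * q) = mkh I q := by
    unfold delA
    rw [FreeMonoid.toList_of_mul, List.erase_cons_head, FreeMonoid.ofList_toList]
  rw [e1, e2] at hd
  exact hd

lemma heap_cancel_list (hirr : ∀ a : S, ¬ I a a) (l : List S) (u v : Heap I)
    (h : mkh I (.ofList l) * u = mkh I (.ofList l) * v) : u = v := by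
  induction l generalizing u v with
  | nil =>
      rw [FreeMonoid.ofList_nil, mkh_one, one_mul, one_mul] at h
      exact h
  | cons c t ih =>
      rw [FreeMonoid.ofList_cons, mkh_mul, mul_assoc, mul_assoc] at h
      exact ih _ _ (cancel_of hirr h)

lemma heap_cancel (hirr : ∀ a : S, ¬ I a a) (x u v : Heap I)
    (h : x * u = x * v) : u = v := by
  obtain ⟨w, rfl⟩ := mkh_surj x
  exact heap_cancel_list hirr w.toList u v (by rwa [FreeMonoid.ofList_toList])

end Cancel

/-! ### The first-letter predicate -/

/-- `Qb I b l` : the word `l` has an occurrence of `b` preceded only by letters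
independent of `b`. -/
def Qb (I : S → S → Prop) (b : S) (l : List S) : Prop :=
  ∃ l₁ l₂, l = l₁ ++ b :: l₂ ∧ ∀ c ∈ l₁, I c b

lemma Qb_nil {b : S} : ¬ Qb I b [] := by
  rintro ⟨l₁, l₂, h, -⟩
  simp at h

lemma Qb_cons {b c : S} {l : List S} :
    Qb I b (c :: l) ↔ c = b ∨ (I c b ∧ Qb I b l) := by
  constructor
  · rintro ⟨l₁, l₂, h, hind⟩
    cases l₁ with
    | nil =>
        have h' : c = b ∧ l = l₂ := by simpa using h
        exact Or.inl h'.1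
    | cons d t =>
        have h' : c = d ∧ l = t ++ b :: l₂ := by simpa using h
        right
        refine ⟨h'.1 ▸ hind d (List.mem_cons_self),
          ⟨t, l₂, h'.2, fun e he => hind e (List.mem_cons_of_mem _ he)⟩⟩
  · rintro (rfl | ⟨hI, l₁, l₂, rfl, hind⟩)
    · exact ⟨[], l, rfl, by simp⟩
    · refine ⟨c :: l₁, l₂, rfl, ?_⟩
      intro e he
      rcases List.mem_cons.mp he with rfl | he
      · exact hI
      · exact hind e he

lemma Qb_append {b : S} {p q : List S} :
    Qb I b (p ++ q) ↔ Qb I b p ∨ ((∀ c ∈ p, I c b) ∧ Qb I b q) := by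
  induction p with
  | nil =>
      simp only [List.nil_append]
      have h0 : Qb I b [] ↔ False := iff_false_intro Qb_nil
      simp [h0]
  | cons c t ih =>
      simp only [List.cons_append, Qb_cons, ih, List.forall_mem_cons]
      tauto

lemma Qb_swap (hsymm : ∀ a b : S, I a b → I b a) {b c d : S} (h : I c d)
    (hq : Qb I b [c, d]) : Qb I b [d, c] := by
  have h0 : Qb I b ([] : List S) ↔ False := iff_false_intro Qb_nil
  simp only [Qb_cons, h0, and_false, or_false] at hq ⊢
  rcases hq with rfl | ⟨h1, rfl⟩
  · exact Or.inr ⟨hsymm _ _ h, rfl⟩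
  · exact Or.inl rfl

lemma Qb_congr [DecidableEq S] (hsymm : ∀ a b : S, I a b → I b a) {b : S}
    {w u : FreeMonoid S} (h : HeapCon I w u) :
    Qb I b w.toList ↔ Qb I b u.toList := by
  induction h with
  | of w u h =>
      obtain ⟨c, d, hcd, rfl, rfl⟩ := h
      exact ⟨Qb_swap hsymm hcd, Qb_swap hsymm (hsymm _ _ hcd)⟩
  | refl _ => exact Iff.rfl
  | symm _ ih => exact ih.symm
  | trans _ _ ih1 ih2 => exact ih1.trans ih2
  | mul h1 h2 ih1 ih2 =>
      rename_i p p' q q'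
      have e1 : mkh I (.ofList p.toList) = mkh I (.ofList p'.toList) := by
        rw [FreeMonoid.ofList_toList, FreeMonoid.ofList_toList]
        exact mkh_eq_iff.mpr h1
      have hmem := mem_iff_of_mkh_eq e1
      show Qb I b (p.toList ++ q.toList) ↔ Qb I b (p'.toList ++ q'.toList)
      rw [Qb_append, Qb_append, ih1, ih2]
      have hmemall : (∀ c ∈ p.toList, I c b) ↔ (∀ c ∈ p'.toList, I c b) :=
        ⟨fun hh c hc => hh c ((hmem c).mpr hc), fun hh c hc => hh c ((hmem c).mp hc)⟩
      rw [hmemall]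

lemma Qb_le_aux (b : S) (l₂ : List S) :
    ∀ l₁ : List S, (∀ c ∈ l₁, I c b) →
      hLe (mkh I (.of b)) (mkh I (.ofList (l₁ ++ b :: l₂)))
  | [], _ => ⟨mkh I (.ofList l₂), by rw [← mkh_mul]; rfl⟩
  | c :: t, hind => by
      have hcb : I c b := hind c (List.mem_cons_self)
      obtain ⟨z, hz⟩ := Qb_le_aux b l₂ t fun e he => hind e (List.mem_cons_of_mem _ he)
      refine ⟨mkh I (.of c) * z, ?_⟩
      have h1 : mkh I (.ofList ((c :: t) ++ b :: l₂))
          = mkh I (.of c) * mkh I (.ofList (t ++ b :: l₂)) := by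
        rw [← mkh_mul]; rfl
      rw [h1, hz, ← mul_assoc, ← mkh_mul, mkh_swap hcb, mkh_mul, mul_assoc]

lemma Qb_le {b : S} {l : List S} (h : Qb I b l) :
    hLe (mkh I (.of b)) (mkh I (.ofList l)) := by
  obtain ⟨l₁, l₂, rfl, hind⟩ := h
  exact Qb_le_aux b l₂ l₁ hind

lemma le_Qb [DecidableEq S] (hsymm : ∀ a b : S, I a b → I b a) {b : S} {l : List S}
    (h : hLe (mkh I (.of b)) (mkh I (.ofList l))) : Qb I b l := by
  obtain ⟨z, hz⟩ := h
  obtain ⟨q, rfl⟩ := mkh_surj z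
  rw [← mkh_mul] at hz
  have hc : HeapCon I (.of b * q) (.ofList l) := mkh_eq_iff.mp hz.symm
  have h0 : Qb I b (FreeMonoid.toList (.of b * q)) :=
    ⟨[], q.toList, rfl, by simp⟩
  have := (Qb_congr hsymm hc).mp h0
  simpa using this

/-! ### Clique words -/

lemma mkh_ofList_map (l : List S) :
    mkh I (.ofList l) = (l.map fun a => mkh I (.of a)).prod := by
  induction l with
  | nil => rw [FreeMonoid.ofList_nil, mkh_one, List.map_nil, List.prod_nil]
  | cons c t ih => rw [FreeMonoid.ofList_cons, mkh_mul, ih, List.map_cons, List.prod_cons]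

lemma noncommProd_eq_toList_prod {M : Type} [Monoid M] (s : Finset S) (f : S → M) (comm) :
    s.noncommProd f comm = (s.toList.map f).prod := by
  have key : ∀ (m : Multiset M) (h : Set.Pairwise {x | x ∈ m} Commute) (l : List M),
      m = ↑l → Multiset.noncommProd m h = l.prod := by
    rintro m h l rfl
    exact Multiset.noncommProd_coe l h
  refine key _ _ _ ?_
  rw [← Multiset.coe_toList s.val]
  exact Multiset.map_coe _ _

/-- A canonical word for a clique. -/
noncomputable def wordCl (γ : Cl I) : FreeMonoid S := .ofList γ.1.toList

lemma heap_eq_word (γ : Cl I) : γ.heap = mkh I (wordCl γ) := by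
  unfold Cl.heap wordCl
  refine (noncommProd_eq_toList_prod _ _ _).trans ?_
  exact (mkh_ofList_map _).symm

lemma clique_div_of_mem (γ : Cl I) {b : S} (hb : b ∈ γ.1) :
    hLe (mkh I (.of b)) γ.heap := by
  rw [heap_eq_word]
  apply Qb_le
  obtain ⟨l₁, l₂, he⟩ := List.append_of_mem (Finset.mem_toList.mpr hb)
  refine ⟨l₁, l₂, he, ?_⟩
  intro c hc
  have hcγ : c ∈ γ.1 := Finset.mem_toList.mp (by rw [he]; exact List.mem_append_left _ hc)
  have hnd := γ.1.nodup_toList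
  rw [he] at hnd
  have hdisj := (List.nodup_append.mp hnd).2.2
  have hcb : c ≠ b := by
    rintro rfl
    exact hdisj _ hc _ List.mem_cons_self rfl
  exact γ.2 c hcγ b hb hcb

lemma occ_clique [DecidableEq S] (γ : Cl I) (a : S) :
    occ a γ.heap = if a ∈ γ.1 then 1 else 0 := by
  rw [heap_eq_word]
  unfold wordCl
  rw [occ_mkh]
  by_cases h : a ∈ γ.1
  · rw [if_pos h, List.count_eq_one_of_mem (Finset.nodup_toList _) (Finset.mem_toList.mpr h)]
  · rw [if_neg h, List.count_eq_zero.mpr fun hc => h (Finset.mem_toList.mp hc)]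

lemma emptyCl_heap : (emptyCl I).heap = 1 := rfl

lemma move_emptyCl (γ : Cl I) : Move γ (emptyCl I) :=
  fun b hb => absurd hb (Finset.notMem_empty b)

/-! ### Partial products -/

lemma ppSeq_succ (c : ℕ → Cl I) (n : ℕ) :
    ppSeq c (n + 1) = ppSeq c n * (c n).heap := by
  unfold ppSeq
  rw [List.range_succ, List.map_append, List.prod_append, List.map_singleton,
    List.prod_singleton]

lemma ppSeq_congr {c d : ℕ → Cl I} {n : ℕ} (h : ∀ j < n, c j = d j) :
    ppSeq c n = ppSeq d n := by
  unfold ppSeq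
  congr 1
  exact List.map_congr_left fun j hj => by rw [h j (List.mem_range.mp hj)]

/-- The word of the cliques `c i, c (i+1), …, c (i+t-1)`. -/
noncomputable def blockW (c : ℕ → Cl I) : ℕ → ℕ → FreeMonoid S
  | _, 0 => 1
  | i, t + 1 => wordCl (c i) * blockW c (i + 1) t

lemma blockW_zero (c : ℕ → Cl I) (i : ℕ) : blockW c i 0 = 1 := rfl

lemma blockW_succ (c : ℕ → Cl I) (i t : ℕ) :
    blockW c i (t + 1) = wordCl (c i) * blockW c (i + 1) t := rfl

lemma blockW_succ_right (c : ℕ → Cl I) (i t : ℕ) :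
    blockW c i (t + 1) = blockW c i t * wordCl (c (i + t)) := by
  induction t generalizing i with
  | zero =>
      rw [blockW_succ, blockW_zero, blockW_zero, one_mul, mul_one, Nat.add_zero]
  | succ t ih =>
      rw [blockW_succ c i (t + 1), ih (i + 1), blockW_succ c i t, mul_assoc,
        show i + 1 + t = i + (t + 1) from by omega]

lemma ppSeq_add (c : ℕ → Cl I) (i t : ℕ) :
    ppSeq c (i + t) = ppSeq c i * mkh I (blockW c i t) := by
  induction t with
  | zero =>
      show ppSeq c i = ppSeq c i * mkh I 1
      rw [mkh_one, mul_one]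
  | succ t ih =>
      rw [show i + (t + 1) = (i + t) + 1 from rfl, ppSeq_succ, ih, blockW_succ_right,
        mkh_mul, mul_assoc, heap_eq_word]

lemma ppSeq_le (c : ℕ → Cl I) {m n : ℕ} (h : m ≤ n) : hLe (ppSeq c m) (ppSeq c n) := by
  obtain ⟨t, rfl⟩ := Nat.exists_eq_add_of_le h
  exact ⟨_, ppSeq_add c m t⟩

lemma ppSeq_stab {c : ℕ → Cl I} {N : ℕ} (hc : ∀ n, N ≤ n → c n = emptyCl I) :
    ∀ t, ppSeq c (N + t) = ppSeq c N
  | 0 => rfl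
  | t + 1 => by
      rw [show N + (t + 1) = (N + t) + 1 from rfl, ppSeq_succ,
        hc (N + t) (Nat.le_add_right N t), emptyCl_heap, mul_one, ppSeq_stab hc t]

/-! ### The first clique of an admissible sequence -/

lemma first_clique [DecidableEq S] (hsymm : ∀ a b : S, I a b → I b a)
    {d : ℕ → Cl I} (hmv : ∀ n, Move (d n) (d (n + 1))) {b : S} :
    ∀ t i, hLe (mkh I (.of b)) (mkh I (blockW d i t)) → b ∈ (d i).1
  | 0, i, h => by
      exfalso
      obtain ⟨z, hz⟩ := h
      have hz' : (1 : Heap I) = mkh I (.of b) * z := by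
        rw [← mkh_one (I := I)]
        exact hz
      have := congrArg (occ b) hz'
      rw [occ_one, occ_mul, occ_of, if_pos rfl] at this
      omega
  | t + 1, i, h => by
      have hq := le_Qb hsymm
        (show hLe (mkh I (.of b))
            (mkh I (.ofList ((d i).1.toList ++ (blockW d (i + 1) t).toList))) from h)
      rcases Qb_append.mp hq with hql | ⟨hall, hqr⟩
      · obtain ⟨l₁, l₂, he, -⟩ := hql
        have hbmem : b ∈ (d i).1.toList := by
          rw [he]
          exact List.mem_append_right _ (List.mem_cons_self)
        exact Finset.mem_toList.mp hbmem
      · exfalso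
        have hble : hLe (mkh I (.of b)) (mkh I (blockW d (i + 1) t)) := by
          have := Qb_le hqr
          rwa [FreeMonoid.ofList_toList] at this
        have hb1 : b ∈ (d (i + 1)).1 := first_clique hsymm hmv t (i + 1) hble
        obtain ⟨a, ha, hnab⟩ := hmv i b hb1
        exact hnab (hall a (Finset.mem_toList.mpr ha))

lemma div_mul_cases [DecidableEq S] (hsymm : ∀ a b : S, I a b → I b a) {b : S}
    (u z : Heap I) (h : hLe (mkh I (.of b)) (u * z)) :
    hLe (mkh I (.of b)) u ∨ ∀ c, 0 < occ c u → I c b := by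
  obtain ⟨p, rfl⟩ := mkh_surj u
  obtain ⟨q, rfl⟩ := mkh_surj z
  rw [← mkh_mul] at h
  have hq := le_Qb hsymm
    (show hLe (mkh I (.of b)) (mkh I (.ofList (p.toList ++ q.toList))) from h)
  rcases Qb_append.mp hq with h1 | ⟨hall, -⟩
  · left
    have := Qb_le h1
    rwa [FreeMonoid.ofList_toList] at this
  · right
    intro c hc
    apply hall
    have hcount : 0 < p.toList.count c := by
      rw [← occ_mkh (I := I), FreeMonoid.ofList_toList]
      exact hc
    exact List.count_pos_iff.mp hcount

/-! ### The Cartier–Foata decomposition of a truncation -/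

/-- The truncation of the CF sequence of `ξ` after `k+1` cliques. -/
def truncSeq (ξ : Bnd I) (k : ℕ) : ℕ → Cl I :=
  fun j => if j < k + 1 then ξ.1 j else emptyCl I

lemma cfprop_trunc (ξ : Bnd I) (k : ℕ) :
    CFprop I (truncSeq ξ k) (ppSeq ξ.1 (k + 1)) := by
  constructor
  · intro n
    unfold truncSeq
    by_cases h1 : n + 1 < k + 1
    · rw [if_pos (by omega : n < k + 1), if_pos h1]
      exact ξ.2.2 n
    · rw [if_neg h1]
      by_cases h0 : n < k + 1
      · rw [if_pos h0]; exact move_emptyCl _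
      · rw [if_neg h0]; exact move_emptyCl _
  · refine ⟨k + 1, fun n hn => ⟨?_, ?_⟩⟩
    · obtain ⟨t, rfl⟩ := Nat.exists_eq_add_of_le hn
      rw [ppSeq_stab (c := truncSeq ξ k) (N := k + 1)
        (fun m hm => by unfold truncSeq; exact if_neg (by omega)) t]
      exact ppSeq_congr fun j hj => by unfold truncSeq; rw [if_pos hj]
    · unfold truncSeq
      exact if_neg (by omega)

lemma cf_trunc (hCF : ∀ x : Heap I, ∃! c : ℕ → Cl I, CFprop I c x) (ξ : Bnd I) (k : ℕ) :
    cf I (ppSeq ξ.1 (k + 1)) = truncSeq ξ k := by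
  have hex : ∃ c, CFprop I c (ppSeq ξ.1 (k + 1)) := ⟨_, cfprop_trunc ξ k⟩
  unfold cf
  rw [dif_pos hex]
  exact (hCF _).unique hex.choose_spec (cfprop_trunc ξ k)

lemma ppSeq_trunc (ξ : Bnd I) (k n : ℕ) :
    ppSeq (truncSeq ξ k) n = ppSeq ξ.1 (min n (k + 1)) := by
  rcases le_or_gt n (k + 1) with h | h
  · rw [min_eq_left h]
    exact ppSeq_congr fun j hj => by unfold truncSeq; rw [if_pos (by omega)]
  · rw [min_eq_right (by omega : k + 1 ≤ n)]
    obtain ⟨t, rfl⟩ := Nat.exists_eq_add_of_le (le_of_lt h)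
    rw [ppSeq_stab (c := truncSeq ξ k) (N := k + 1)
      (fun m hm => by unfold truncSeq; exact if_neg (by omega)) t]
    exact ppSeq_congr fun j hj => by unfold truncSeq; rw [if_pos hj]

/-! ### The key lemma -/

lemma Vmax_key [DecidableEq S] (hsymm : ∀ a b : S, I a b → I b a)
    (hirr : ∀ a : S, ¬ I a a)
    (hCF : ∀ x : Heap I, ∃! c : ℕ → Cl I, CFprop I c x)
    (ξ ξ' : Bnd I) (k : ℕ) (hmax : IsMaxCl (ξ.1 k))
    (hle : mLe (.inl (ppSeq ξ.1 (k + 1))) (.inr ξ')) :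
    ∀ i, i ≤ k → ξ'.1 i = ξ.1 i := by
  have hle' : ∀ n, hLe (ppSeq ξ.1 (min n (k + 1))) (ppSeq ξ'.1 n) := by
    intro n
    have h : hLe (ppSeq (cf I (ppSeq ξ.1 (k + 1))) n) (ppSeq ξ'.1 n) := hle n
    rwa [cf_trunc hCF, ppSeq_trunc] at h
  intro i
  induction i using Nat.strong_induction_on with
  | _ i ih =>
  intro hik
  have hppi : ppSeq ξ'.1 i = ppSeq ξ.1 i :=
    ppSeq_congr fun j hj => ih j hj (by omega)
  -- level i+1
  obtain ⟨z, hz⟩ := hle' (i + 1)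
  rw [min_eq_left (by omega : i + 1 ≤ k + 1), ppSeq_succ, ppSeq_succ, hppi,
    mul_assoc] at hz
  have hz' : (ξ'.1 i).heap = (ξ.1 i).heap * z := heap_cancel hirr _ _ _ hz
  have hsub1 : ∀ a ∈ (ξ.1 i).1, a ∈ (ξ'.1 i).1 := by
    intro a ha
    have h1 : 0 < occ a (ξ'.1 i).heap := by
      rw [hz', occ_mul, occ_clique, if_pos ha]
      omega
    rw [occ_clique] at h1
    by_contra hcon
    rw [if_neg hcon] at h1
    omega
  -- level k+1
  set t := k - i with ht
  have hkit : k + 1 = i + (t + 1) := by omega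
  obtain ⟨z', hzk⟩ := hle' (k + 1)
  rw [min_self, hkit, ppSeq_add, ppSeq_add, hppi, mul_assoc] at hzk
  have hblk : mkh I (blockW ξ'.1 i (t + 1)) = mkh I (blockW ξ.1 i (t + 1)) * z' :=
    heap_cancel hirr _ _ _ hzk
  have hsub2 : ∀ b ∈ (ξ'.1 i).1, b ∈ (ξ.1 i).1 := by
    intro b hb
    by_contra hbn
    obtain ⟨z₁, hz₁⟩ := clique_div_of_mem (ξ'.1 i) hb
    have hdiv : hLe (mkh I (.of b)) (mkh I (blockW ξ'.1 i (t + 1))) := by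
      refine ⟨z₁ * mkh I (blockW ξ'.1 (i + 1) t), ?_⟩
      show mkh I (wordCl (ξ'.1 i) * blockW ξ'.1 (i + 1) t) = _
      rw [mkh_mul, ← heap_eq_word, hz₁, mul_assoc]
    rw [hblk] at hdiv
    rcases div_mul_cases hsymm _ _ hdiv with hcase | hcase
    · exact hbn (first_clique hsymm ξ.2.2 (t + 1) i hcase)
    · have hindep : ∀ a ∈ (ξ.1 k).1, I a b := by
        intro a ha
        apply hcase
        rw [blockW_succ_right, mkh_mul, occ_mul, show i + t = k by omega]
        have h2 : occ a (mkh I (wordCl (ξ.1 k))) = 1 := by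
          rw [← heap_eq_word, occ_clique, if_pos ha]
        omega
      have hbk : b ∉ (ξ.1 k).1 := fun hbk => hirr b (hindep b hbk)
      have hcl : ∀ a ∈ insert b (ξ.1 k).1, ∀ a' ∈ insert b (ξ.1 k).1, a ≠ a' → I a a' := by
        intro a ha a' ha' hne
        rcases Finset.mem_insert.mp ha with h1 | h1
        · rcases Finset.mem_insert.mp ha' with h2 | h2
          · exact absurd (h1.trans h2.symm) hne
          · rw [h1]; exact hsymm _ _ (hindep a' h2)
        · rcases Finset.mem_insert.mp ha' with h2 | h2
          · rw [h2]; exact hindep a h1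
          · exact (ξ.1 k).2 a h1 a' h2 hne
      have hcomm : ∀ (γ : Cl I), (∀ a ∈ γ.1, I b a) →
          mkh I (.of b) * γ.heap = γ.heap * mkh I (.of b) := by
        intro γ hγ
        unfold Cl.heap
        refine (Finset.noncommProd_commute _ _ _ _ fun a ha => ?_).eq
        show mkh I (.of b) * mkh I (.of a) = mkh I (.of a) * mkh I (.of b)
        rw [← mkh_mul, ← mkh_mul, mkh_swap (hγ a ha)]
      have hd' : Cl.heap ⟨insert b (ξ.1 k).1, hcl⟩ = mkh I (.of b) * (ξ.1 k).heap := by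
        unfold Cl.heap
        exact Finset.noncommProd_insert_of_notMem _ _ _ _ hbk
      have hmaxap : Cl.heap ⟨insert b (ξ.1 k).1, hcl⟩ = (ξ.1 k).heap := by
        apply hmax
        refine ⟨mkh I (.of b), ?_⟩
        rw [hd', hcomm _ fun a ha => hsymm _ _ (hindep a ha)]
      have hocc := congrArg (occ b) hmaxap
      rw [hd', occ_mul, occ_of, if_pos rfl] at hocc
      omega
  exact Subtype.ext (Finset.ext fun a => ⟨fun h => hsub2 a h, fun h => hsub1 a h⟩)

end VmaxAST

theorem Vmax_isAST
    {S : Type} [Fintype S] [DecidableEq S] (I : S → S → Prop)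
    (hsymm : ∀ a b : S, I a b → I b a)
    (hirr : ∀ a : S, ¬ I a a)
    (hconn : ∀ a b : S, Relation.ReflTransGen (fun x y : S => x ≠ y ∧ ¬ I x y) a b)
    (hcard : 1 < Fintype.card S)
    (hCF : ∀ x : Heap I, ∃! c : ℕ → Cl I, CFprop I c x)
 :
    IsAST (fun ξ : Bnd I => Vmax ξ) := by
  classical
  constructor
  · intro ξ
    show mLe (Vmax ξ) (.inr ξ)
    unfold Vmax
    by_cases h : ∃ j : ℕ, IsMaxCl (ξ.1 j)
    · erw [dif_pos h]
      intro n
      show hLe (ppSeq (cf I (ppSeq ξ.1 (Nat.find h + 1))) n) (ppSeq ξ.1 n)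
      rw [cf_trunc hCF ξ (Nat.find h), ppSeq_trunc]
      exact ppSeq_le _ (min_le_left _ _)
    · erw [dif_neg h]
      intro n
      exact hLe_refl _
  · intro ξ ξ' x hV hle
    show Vmax ξ' = Vmax ξ
    simp only [Vmax] at hV ⊢
    by_cases h : ∃ j : ℕ, IsMaxCl (ξ.1 j)
    · erw [dif_pos h] at hV ⊢
      injection hV with hx
      have hle2 : mLe (.inl (ppSeq ξ.1 (Nat.find h + 1))) (.inr ξ') := by
        rw [hx]; exact hle
      have hk := Vmax_key hsymm hirr hCF ξ ξ' (Nat.find h) (Nat.find_spec h) hle2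
      have h' : ∃ j : ℕ, IsMaxCl (ξ'.1 j) :=
        ⟨Nat.find h, by rw [hk _ (le_refl _)]; exact Nat.find_spec h⟩
      have hfind : Nat.find h' = Nat.find h := by
        apply le_antisymm
        · exact Nat.find_le (by rw [hk _ (le_refl _)]; exact Nat.find_spec h)
        · by_contra hcon
          push_neg at hcon
          have h1 : IsMaxCl (ξ'.1 (Nat.find h')) := Nat.find_spec h'
          rw [hk _ (by omega)] at h1
          exact Nat.find_min h hcon h1
      erw [dif_pos h', hfind]
      have hpp : ppSeq ξ'.1 (Nat.find h + 1) = ppSeq ξ.1 (Nat.find h + 1) :=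
        ppSeq_congr fun j hj => hk j (by omega)
      rw [hpp]
    · erw [dif_neg h] at hV
      exact absurd hV (by simp)

end HeapPaper
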